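/- Let A, B be bounded linear operators on a Banach space. The Strang splitting satisfies ‖e^{(A+B)h} − e^{Ah/2}e^{Bh}e^{Ah/2}‖ ≤ C h³ for all h ∈ [0,1], with C depending only on ‖A‖ and ‖B‖. -/

import Mathlib

open NormedSpace Nat

set_option linter.unusedSectionVars false
set_option maxHeartbeats 4000000
set_option synthInstance.maxHeartbeats 400000

section Aux

variable {X : Type*} [NormedAddCommGroup X] [NormedSpace ℝ X] [CompleteSpace X]

lemma my_norm_pow (M : X →L[ℝ] X) : ∀ n : ℕ, ‖M ^ n‖ ≤ ‖M‖ ^ n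
  | 0 => by simpa [ContinuousLinearMap.one_def] using ContinuousLinearMap.norm_id_le
  | n + 1 => by
      rw [pow_succ, pow_succ]
      exact (norm_mul_le _ _).trans
        (mul_le_mul (my_norm_pow M n) le_rfl (norm_nonneg _) (pow_nonneg (norm_nonneg _) _))

lemma my_term_bound (M : X →L[ℝ] X) (n : ℕ) :
    ‖((n ! : ℝ))⁻¹ • M ^ n‖ ≤ ‖M‖ ^ n / (n ! : ℝ) := by
  rw [norm_smul ((n ! : ℝ))⁻¹ (M ^ n), Real.norm_eq_abs, abs_of_nonneg (by positivity)]
  rw [div_eq_inv_mul]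
  exact mul_le_mul le_rfl (my_norm_pow M n) (norm_nonneg _) (by positivity)

lemma real_exp_eq (x : ℝ) : Real.exp x = ∑' n : ℕ, x ^ n / (n ! : ℝ) := by
  rw [Real.exp_eq_exp_ℝ, exp_eq_tsum_div]

lemma clm_exp_eq (M : X →L[ℝ] X) : exp M = ∑' n : ℕ, ((n ! : ℝ))⁻¹ • M ^ n := by
  rw [exp_eq_tsum (𝕂 := ℝ)]

lemma my_norm_exp_le (M : X →L[ℝ] X) : ‖exp M‖ ≤ Real.exp ‖M‖ := by
  rw [clm_exp_eq, real_exp_eq]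
  refine (norm_tsum_le_tsum_norm (norm_expSeries_summable' (𝕂 := ℝ) M)).trans ?_
  exact Summable.tsum_le_tsum (fun n => my_term_bound M n)
    (norm_expSeries_summable' (𝕂 := ℝ) M) (Real.summable_pow_div_factorial ‖M‖)

lemma exp_remainder (M : X →L[ℝ] X) :
    ‖exp M - (1 + M + (2⁻¹ : ℝ) • (M * M))‖ ≤ ‖M‖ ^ 3 * Real.exp ‖M‖ := by
  have hs : Summable (fun n : ℕ => ((n ! : ℝ))⁻¹ • M ^ n) := expSeries_summable' (𝕂 := ℝ) M
  have hsplit := Summable.sum_add_tsum_nat_add (f := fun n : ℕ => ((n ! : ℝ))⁻¹ • M ^ n) 3 hs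
  have hdiff : exp M - (1 + M + (2⁻¹ : ℝ) • (M * M))
      = ∑' n : ℕ, (((n + 3)! : ℝ))⁻¹ • M ^ (n + 3) := by
    rw [clm_exp_eq, ← hsplit]
    have : (∑ i ∈ Finset.range 3, ((i ! : ℝ))⁻¹ • M ^ i) = 1 + M + (2⁻¹ : ℝ) • (M * M) := by
      simp [Finset.sum_range_succ, Nat.factorial, pow_succ]
    rw [this]
    abel
  rw [hdiff]
  have hnorm_sum : Summable (fun n : ℕ => ‖(((n + 3)! : ℝ))⁻¹ • M ^ (n + 3)‖) :=
    (summable_nat_add_iff 3).mpr (norm_expSeries_summable' (𝕂 := ℝ) M)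
  refine (norm_tsum_le_tsum_norm hnorm_sum).trans ?_
  have hsum2 : Summable (fun n : ℕ => ‖M‖ ^ 3 * (‖M‖ ^ n / (n ! : ℝ))) :=
    (Real.summable_pow_div_factorial ‖M‖).mul_left _
  have hle : ∀ n : ℕ, ‖(((n + 3)! : ℝ))⁻¹ • M ^ (n + 3)‖ ≤ ‖M‖ ^ 3 * (‖M‖ ^ n / (n ! : ℝ)) := by
    intro n
    refine (my_term_bound M (n + 3)).trans ?_
    rw [div_le_iff₀ (by positivity)]
    have h1 : ‖M‖ ^ (n + 3) = ‖M‖ ^ 3 * ‖M‖ ^ n := by ring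
    have h2 : (n ! : ℝ) ≤ ((n + 3)! : ℝ) := by
      exact_mod_cast Nat.factorial_le (by omega)
    have h3 : (0:ℝ) < n ! := by positivity
    rw [h1]
    calc ‖M‖ ^ 3 * ‖M‖ ^ n = (‖M‖ ^ 3 * (‖M‖ ^ n / (n ! : ℝ))) * n ! := by field_simp
      _ ≤ (‖M‖ ^ 3 * (‖M‖ ^ n / (n ! : ℝ))) * ((n + 3)! : ℝ) := by
          have : (0:ℝ) ≤ ‖M‖ ^ 3 * (‖M‖ ^ n / (n ! : ℝ)) := by positivity
          exact mul_le_mul_of_nonneg_left h2 this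
  refine (Summable.tsum_le_tsum hle hnorm_sum hsum2).trans ?_
  rw [tsum_mul_left, real_exp_eq]

lemma exp_taylor (M : X →L[ℝ] X) {t : ℝ} (ht0 : 0 ≤ t) (ht1 : t ≤ 1) :
    ‖exp (t • M) - (1 + t • M + (t ^ 2 / 2) • (M * M))‖
      ≤ ‖M‖ ^ 3 * Real.exp ‖M‖ * t ^ 3 := by
  have hrem := exp_remainder (t • M)
  have hpoly : (1 : X →L[ℝ] X) + t • M + (2⁻¹ : ℝ) • (t • M * (t • M))
      = 1 + t • M + (t ^ 2 / 2) • (M * M) := by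
    simp only [smul_mul_assoc, mul_smul_comm, smul_smul]
    module
  rw [hpoly] at hrem
  refine hrem.trans ?_
  have hnorm : ‖t • M‖ = t * ‖M‖ := by
    rw [norm_smul t M, Real.norm_eq_abs, abs_of_nonneg ht0]
  rw [hnorm]
  have h1 : (t * ‖M‖) ^ 3 = ‖M‖ ^ 3 * t ^ 3 := by ring
  rw [h1]
  have h2 : Real.exp (t * ‖M‖) ≤ Real.exp ‖M‖ := by
    refine Real.exp_le_exp.mpr ?_
    nlinarith [norm_nonneg M]
  nlinarith [pow_nonneg (norm_nonneg M) 3, pow_nonneg ht0 3, Real.exp_pos (t * ‖M‖),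
    mul_nonneg (pow_nonneg (norm_nonneg M) 3) (pow_nonneg ht0 3)]

lemma bnd_mul3 {P Q R : X →L[ℝ] X} {p q u : ℝ} (hp : 0 ≤ p) (hq : 0 ≤ q)
    (hP : ‖P‖ ≤ p) (hQ : ‖Q‖ ≤ q) (hR : ‖R‖ ≤ u) : ‖P * Q * R‖ ≤ p * q * u :=
  calc ‖P * Q * R‖ ≤ ‖P * Q‖ * ‖R‖ := norm_mul_le _ _
    _ ≤ p * q * u := mul_le_mul
        ((norm_mul_le _ _).trans (mul_le_mul hP hQ (norm_nonneg _) hp)) hR (norm_nonneg _)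
        (mul_nonneg hp hq)

lemma bnd_smul {c : ℝ} {M : X →L[ℝ] X} {K : ℝ} (hc : |c| ≤ 1) (hM : ‖M‖ ≤ K)
    (hK : 0 ≤ K) : ‖c • M‖ ≤ K := by
  rw [norm_smul c M, Real.norm_eq_abs]
  calc |c| * ‖M‖ ≤ 1 * K := mul_le_mul hc hM (norm_nonneg _) zero_le_one
    _ = K := one_mul K

lemma bnd_add {a b : X →L[ℝ] X} {x y : ℝ} (ha : ‖a‖ ≤ x) (hb : ‖b‖ ≤ y) :
    ‖a + b‖ ≤ x + y := (norm_add_le a b).trans (add_le_add ha hb)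

noncomputable def strangE (A B : X →L[ℝ] X) (h : ℝ) : X →L[ℝ] X :=
      (1/8 : ℝ) • (B * A * A) + (1/4 : ℝ) • (B * B * A) + (1/8 : ℝ) • (A * A * A)
    + (1/4 : ℝ) • (A * B * A) + (1/4 : ℝ) • (A * B * B) + (1/8 : ℝ) • (A * A * B)
    + (h/16) • (B * B * (A * A)) + (h/16) • (A * B * (A * A)) + (h/8) • (A * (B * B) * A)
    + (h/64) • (A * A * (A * A)) + (h/16) • ((A * A) * B * A) + (h/16) • ((A * A) * B * B)
    + (h^2/32) • (A * (B * B) * (A * A)) + (h^2/64) • ((A * A) * B * (A * A))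
    + (h^2/32) • ((A * A) * (B * B) * A)
    + (h^3/128) • ((A * A) * (B * B) * (A * A))

lemma strang_key (A B : X →L[ℝ] X) (h : ℝ) :
    (1 + (h/2) • A + ((h/2)^2/2) • (A * A)) * (1 + h • B + (h^2/2) • (B * B))
      * (1 + (h/2) • A + ((h/2)^2/2) • (A * A))
    = (1 + h • (A + B) + (h^2/2) • ((A + B) * (A + B))) + h^3 • strangE A B h := by
  unfold strangE
  simp only [mul_add, add_mul, mul_one, one_mul, smul_mul_assoc, mul_smul_comm,
    smul_smul, smul_add, mul_assoc]
  module

lemma strangE_bound (A B : X →L[ℝ] X) {h : ℝ} (h0 : 0 ≤ h) (h1 : h ≤ 1) :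
    ‖strangE A B h‖ ≤ 16 * (1 + ‖A‖ + ‖B‖) ^ 6 := by
  set W : ℝ := 1 + ‖A‖ + ‖B‖ with hW
  have hr0 : 0 ≤ ‖A‖ := norm_nonneg A
  have hs0 : 0 ≤ ‖B‖ := norm_nonneg B
  have hW1 : 1 ≤ W := by simp only [hW]; linarith
  have hW0 : 0 ≤ W := by linarith
  have hW20 : (0:ℝ) ≤ W ^ 2 := by positivity
  have hW60 : (0:ℝ) ≤ W ^ 6 := by positivity
  have hA : ‖A‖ ≤ W := by simp only [hW]; linarith
  have hB : ‖B‖ ≤ W := by simp only [hW]; linarith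
  have hAA : ‖A * A‖ ≤ W ^ 2 := by
    calc ‖A * A‖ ≤ ‖A‖ * ‖A‖ := norm_mul_le _ _
      _ ≤ W * W := mul_le_mul hA hA (norm_nonneg _) hW0
      _ = W ^ 2 := (sq W).symm
  have hBB : ‖B * B‖ ≤ W ^ 2 := by
    calc ‖B * B‖ ≤ ‖B‖ * ‖B‖ := norm_mul_le _ _
      _ ≤ W * W := mul_le_mul hB hB (norm_nonneg _) hW0
      _ = W ^ 2 := (sq W).symm
  have hW3 : W * W * W ≤ W ^ 6 := by
    calc W * W * W = W ^ 3 := by ring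
      _ ≤ W ^ 6 := pow_le_pow_right₀ hW1 (by norm_num)
  have hW4a : W * W * W ^ 2 ≤ W ^ 6 := by
    calc W * W * W ^ 2 = W ^ 4 := by ring
      _ ≤ W ^ 6 := pow_le_pow_right₀ hW1 (by norm_num)
  have hW4b : W * W ^ 2 * W ≤ W ^ 6 := by
    calc W * W ^ 2 * W = W ^ 4 := by ring
      _ ≤ W ^ 6 := pow_le_pow_right₀ hW1 (by norm_num)
  have hW4c : W ^ 2 * W * W ≤ W ^ 6 := by
    calc W ^ 2 * W * W = W ^ 4 := by ring
      _ ≤ W ^ 6 := pow_le_pow_right₀ hW1 (by norm_num)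
  have hW5a : W * W ^ 2 * W ^ 2 ≤ W ^ 6 := by
    calc W * W ^ 2 * W ^ 2 = W ^ 5 := by ring
      _ ≤ W ^ 6 := pow_le_pow_right₀ hW1 (by norm_num)
  have hW5b : W ^ 2 * W * W ^ 2 ≤ W ^ 6 := by
    calc W ^ 2 * W * W ^ 2 = W ^ 5 := by ring
      _ ≤ W ^ 6 := pow_le_pow_right₀ hW1 (by norm_num)
  have hW5c : W ^ 2 * W ^ 2 * W ≤ W ^ 6 := by
    calc W ^ 2 * W ^ 2 * W = W ^ 5 := by ring
      _ ≤ W ^ 6 := pow_le_pow_right₀ hW1 (by norm_num)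
  have hW6 : W ^ 2 * W ^ 2 * W ^ 2 ≤ W ^ 6 := le_of_eq (by ring)
  have h2nn : (0:ℝ) ≤ h ^ 2 := sq_nonneg h
  have h21 : h ^ 2 ≤ 1 := by nlinarith
  have h3nn : (0:ℝ) ≤ h ^ 3 := by positivity
  have h31 : h ^ 3 ≤ 1 := by nlinarith
  have k18 : |(1/8 : ℝ)| ≤ 1 := by rw [abs_of_nonneg (by norm_num : (0:ℝ) ≤ 1/8)]; norm_num
  have k14 : |(1/4 : ℝ)| ≤ 1 := by rw [abs_of_nonneg (by norm_num : (0:ℝ) ≤ 1/4)]; norm_num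
  have k16 : |h/16| ≤ 1 := by rw [abs_of_nonneg (by linarith)]; linarith
  have k8 : |h/8| ≤ 1 := by rw [abs_of_nonneg (by linarith)]; linarith
  have k64 : |h/64| ≤ 1 := by rw [abs_of_nonneg (by linarith)]; linarith
  have k232 : |h^2/32| ≤ 1 := by rw [abs_of_nonneg (by linarith)]; linarith
  have k264 : |h^2/64| ≤ 1 := by rw [abs_of_nonneg (by linarith)]; linarith
  have k3128 : |h^3/128| ≤ 1 := by rw [abs_of_nonneg (by linarith)]; linarith
  have c1 : ‖(1/8 : ℝ) • (B * A * A)‖ ≤ W ^ 6 :=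
    bnd_smul k18 ((bnd_mul3 hW0 hW0 hB hA hA).trans hW3) hW60
  have c2 : ‖(1/4 : ℝ) • (B * B * A)‖ ≤ W ^ 6 :=
    bnd_smul k14 ((bnd_mul3 hW0 hW0 hB hB hA).trans hW3) hW60
  have c3 : ‖(1/8 : ℝ) • (A * A * A)‖ ≤ W ^ 6 :=
    bnd_smul k18 ((bnd_mul3 hW0 hW0 hA hA hA).trans hW3) hW60
  have c4 : ‖(1/4 : ℝ) • (A * B * A)‖ ≤ W ^ 6 :=
    bnd_smul k14 ((bnd_mul3 hW0 hW0 hA hB hA).trans hW3) hW60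
  have c5 : ‖(1/4 : ℝ) • (A * B * B)‖ ≤ W ^ 6 :=
    bnd_smul k14 ((bnd_mul3 hW0 hW0 hA hB hB).trans hW3) hW60
  have c6 : ‖(1/8 : ℝ) • (A * A * B)‖ ≤ W ^ 6 :=
    bnd_smul k18 ((bnd_mul3 hW0 hW0 hA hA hB).trans hW3) hW60
  have c7 : ‖(h/16) • (B * B * (A * A))‖ ≤ W ^ 6 :=
    bnd_smul k16 ((bnd_mul3 hW0 hW0 hB hB hAA).trans hW4a) hW60
  have c8 : ‖(h/16) • (A * B * (A * A))‖ ≤ W ^ 6 :=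
    bnd_smul k16 ((bnd_mul3 hW0 hW0 hA hB hAA).trans hW4a) hW60
  have c9 : ‖(h/8) • (A * (B * B) * A)‖ ≤ W ^ 6 :=
    bnd_smul k8 ((bnd_mul3 hW0 hW20 hA hBB hA).trans hW4b) hW60
  have c10 : ‖(h/64) • (A * A * (A * A))‖ ≤ W ^ 6 :=
    bnd_smul k64 ((bnd_mul3 hW0 hW0 hA hA hAA).trans hW4a) hW60
  have c11 : ‖(h/16) • ((A * A) * B * A)‖ ≤ W ^ 6 :=
    bnd_smul k16 ((bnd_mul3 hW20 hW0 hAA hB hA).trans hW4c) hW60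
  have c12 : ‖(h/16) • ((A * A) * B * B)‖ ≤ W ^ 6 :=
    bnd_smul k16 ((bnd_mul3 hW20 hW0 hAA hB hB).trans hW4c) hW60
  have c13 : ‖(h^2/32) • (A * (B * B) * (A * A))‖ ≤ W ^ 6 :=
    bnd_smul k232 ((bnd_mul3 hW0 hW20 hA hBB hAA).trans hW5a) hW60
  have c14 : ‖(h^2/64) • ((A * A) * B * (A * A))‖ ≤ W ^ 6 :=
    bnd_smul k264 ((bnd_mul3 hW20 hW0 hAA hB hAA).trans hW5b) hW60
  have c15 : ‖(h^2/32) • ((A * A) * (B * B) * A)‖ ≤ W ^ 6 :=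
    bnd_smul k232 ((bnd_mul3 hW20 hW20 hAA hBB hA).trans hW5c) hW60
  have c16 : ‖(h^3/128) • ((A * A) * (B * B) * (A * A))‖ ≤ W ^ 6 :=
    bnd_smul k3128 ((bnd_mul3 hW20 hW20 hAA hBB hAA).trans hW6) hW60
  have total := bnd_add (bnd_add (bnd_add (bnd_add
    (bnd_add (bnd_add (bnd_add (bnd_add
    (bnd_add (bnd_add (bnd_add (bnd_add
    (bnd_add (bnd_add (bnd_add
    c1 c2) c3) c4) c5) c6) c7) c8) c9) c10) c11) c12) c13) c14) c15) c16
  unfold strangE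
  exact total.trans (le_of_eq (by ring))

end Aux

theorem strang_splitting_second_order
    {X : Type*} [NormedAddCommGroup X] [NormedSpace ℝ X] [CompleteSpace X] :
    ∃ C : ℝ → ℝ → ℝ, ∀ (A B : X →L[ℝ] X), ∀ h ∈ Set.Icc (0:ℝ) 1,
      ‖exp (h • (A + B)) - exp ((h / 2) • A) * exp (h • B) * exp ((h / 2) • A)‖
        ≤ C ‖A‖ ‖B‖ * h ^ 3 := by
  refine ⟨fun r s =>
    (r + s) ^ 3 * Real.exp (r + s)
    + 16 * (1 + r + s) ^ 6
    + (r ^ 3 * Real.exp r * ((1 + s ^ 3) * Real.exp s * ((1 + r ^ 3) * Real.exp r))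
      + Real.exp r * (s ^ 3 * Real.exp s * ((1 + r ^ 3) * Real.exp r))
      + Real.exp r * Real.exp s * (r ^ 3 * Real.exp r)), ?_⟩
  intro A B h hh
  obtain ⟨h0, h1⟩ := hh
  dsimp only
  have hr0 : 0 ≤ ‖A‖ := norm_nonneg A
  have hs0 : 0 ≤ ‖B‖ := norm_nonneg B
  set W : ℝ := 1 + ‖A‖ + ‖B‖ with hW
  have hW1 : 1 ≤ W := by simp only [hW]; linarith
  have hW0 : 0 ≤ W := by linarith
  have hW20 : (0:ℝ) ≤ W ^ 2 := by positivity
  have hA : ‖A‖ ≤ W := by simp only [hW]; linarith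
  have hB : ‖B‖ ≤ W := by simp only [hW]; linarith
  have hAA : ‖A * A‖ ≤ W ^ 2 := by
    calc ‖A * A‖ ≤ ‖A‖ * ‖A‖ := norm_mul_le _ _
      _ ≤ W * W := mul_le_mul hA hA (norm_nonneg _) hW0
      _ = W ^ 2 := (sq W).symm
  have hBB : ‖B * B‖ ≤ W ^ 2 := by
    calc ‖B * B‖ ≤ ‖B‖ * ‖B‖ := norm_mul_le _ _
      _ ≤ W * W := mul_le_mul hB hB (norm_nonneg _) hW0
      _ = W ^ 2 := (sq W).symm
  have hWpow : ∀ k : ℕ, k ≤ 6 → W ^ k ≤ W ^ 6 := fun k hk => pow_le_pow_right₀ hW1 hk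
  have hW60 : (0:ℝ) ≤ W ^ 6 := by positivity
  -- the three exponentials and Taylor polynomials
  set Ea := exp ((h / 2) • A) with hEa_def
  set Eb := exp (h • B) with hEb_def
  set Pa : X →L[ℝ] X := 1 + (h / 2) • A + ((h / 2) ^ 2 / 2) • (A * A) with hPa_def
  set Pb : X →L[ℝ] X := 1 + h • B + (h ^ 2 / 2) • (B * B) with hPb_def
  set T : X →L[ℝ] X := 1 + h • (A + B) + (h ^ 2 / 2) • ((A + B) * (A + B)) with hT_def
  have h30 : (0:ℝ) ≤ h ^ 3 := by positivity
  have h31 : h ^ 3 ≤ 1 := pow_le_one₀ h0 h1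
  have key : Pa * Pb * Pa = T + h ^ 3 • strangE A B h := by
    rw [hPa_def, hPb_def, hT_def]
    exact strang_key A B h
  -- bound on E
  have hEbound : ‖strangE A B h‖ ≤ 16 * W ^ 6 := by
    rw [hW]
    exact strangE_bound A B h0 h1
  -- Taylor bounds for the three exponentials
  have hta : ‖Ea - Pa‖ ≤ ‖A‖ ^ 3 * Real.exp ‖A‖ * h ^ 3 := by
    have := exp_taylor A (t := h / 2) (by linarith) (by linarith)
    rw [hEa_def, hPa_def]
    refine this.trans ?_
    have hmono : (h/2) ^ 3 ≤ h ^ 3 := by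
      rw [show (h/2) ^ 3 = h ^ 3 / 8 from by ring]
      linarith [pow_nonneg h0 3]
    exact mul_le_mul_of_nonneg_left hmono (by positivity)
  have htb : ‖Eb - Pb‖ ≤ ‖B‖ ^ 3 * Real.exp ‖B‖ * h ^ 3 := by
    have := exp_taylor B (t := h) h0 h1
    rw [hEb_def, hPb_def]
    exact this
  have hT1 : ‖exp (h • (A + B)) - T‖ ≤ (‖A‖ + ‖B‖) ^ 3 * Real.exp (‖A‖ + ‖B‖) * h ^ 3 := by
    have := exp_taylor (A + B) (t := h) h0 h1
    rw [hT_def]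
    refine this.trans ?_
    have hAB : ‖A + B‖ ≤ ‖A‖ + ‖B‖ := norm_add_le A B
    have e1 : ‖A + B‖ ^ 3 ≤ (‖A‖ + ‖B‖) ^ 3 := pow_le_pow_left₀ (norm_nonneg _) hAB 3
    have e2 : Real.exp ‖A + B‖ ≤ Real.exp (‖A‖ + ‖B‖) := Real.exp_le_exp.mpr hAB
    exact mul_le_mul_of_nonneg_right
      (mul_le_mul e1 e2 (Real.exp_pos _).le (by positivity)) h30
  -- norms of exponential factors
  have hEa_norm : ‖Ea‖ ≤ Real.exp ‖A‖ := by
    rw [hEa_def]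
    refine (my_norm_exp_le _).trans (Real.exp_le_exp.mpr ?_)
    rw [norm_smul (h/2) A, Real.norm_eq_abs, abs_of_nonneg (by linarith)]
    nlinarith [norm_nonneg A]
  have hEb_norm : ‖Eb‖ ≤ Real.exp ‖B‖ := by
    rw [hEb_def]
    refine (my_norm_exp_le _).trans (Real.exp_le_exp.mpr ?_)
    rw [norm_smul h B, Real.norm_eq_abs, abs_of_nonneg h0]
    nlinarith [norm_nonneg B]
  have hPa_norm : ‖Pa‖ ≤ (1 + ‖A‖ ^ 3) * Real.exp ‖A‖ := by
    have : Pa = Ea + (Pa - Ea) := by abel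
    rw [this]
    refine (norm_add_le _ _).trans ?_
    rw [norm_sub_rev]
    have hc : (0:ℝ) ≤ ‖A‖ ^ 3 * Real.exp ‖A‖ := by positivity
    have hd : ‖A‖ ^ 3 * Real.exp ‖A‖ * h ^ 3 ≤ ‖A‖ ^ 3 * Real.exp ‖A‖ :=
      mul_le_of_le_one_right hc h31
    calc ‖Ea‖ + ‖Ea - Pa‖ ≤ Real.exp ‖A‖ + ‖A‖ ^ 3 * Real.exp ‖A‖ := by
          linarith [hEa_norm, hta]
      _ = (1 + ‖A‖ ^ 3) * Real.exp ‖A‖ := by ring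
  have hPb_norm : ‖Pb‖ ≤ (1 + ‖B‖ ^ 3) * Real.exp ‖B‖ := by
    have : Pb = Eb + (Pb - Eb) := by abel
    rw [this]
    refine (norm_add_le _ _).trans ?_
    rw [norm_sub_rev]
    have hc : (0:ℝ) ≤ ‖B‖ ^ 3 * Real.exp ‖B‖ := by positivity
    have hd : ‖B‖ ^ 3 * Real.exp ‖B‖ * h ^ 3 ≤ ‖B‖ ^ 3 * Real.exp ‖B‖ :=
      mul_le_of_le_one_right hc h31
    calc ‖Eb‖ + ‖Eb - Pb‖ ≤ Real.exp ‖B‖ + ‖B‖ ^ 3 * Real.exp ‖B‖ := by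
          linarith [hEb_norm, htb]
      _ = (1 + ‖B‖ ^ 3) * Real.exp ‖B‖ := by ring
  -- telescoping bound
  have htel : ‖Pa * Pb * Pa - Ea * Eb * Ea‖ ≤
      (‖A‖ ^ 3 * Real.exp ‖A‖ * ((1 + ‖B‖ ^ 3) * Real.exp ‖B‖ * ((1 + ‖A‖ ^ 3) * Real.exp ‖A‖))
      + Real.exp ‖A‖ * (‖B‖ ^ 3 * Real.exp ‖B‖ * ((1 + ‖A‖ ^ 3) * Real.exp ‖A‖))
      + Real.exp ‖A‖ * Real.exp ‖B‖ * (‖A‖ ^ 3 * Real.exp ‖A‖)) * h ^ 3 := by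
    have hid : Pa * Pb * Pa - Ea * Eb * Ea
        = (Pa - Ea) * (Pb * Pa) + Ea * ((Pb - Eb) * Pa) + (Ea * Eb) * (Pa - Ea) := by
      noncomm_ring
    rw [hid]
    have e1 : ‖(Pa - Ea) * (Pb * Pa)‖
        ≤ (‖A‖ ^ 3 * Real.exp ‖A‖ * h ^ 3) * ((1 + ‖B‖ ^ 3) * Real.exp ‖B‖ * ((1 + ‖A‖ ^ 3) * Real.exp ‖A‖)) := by
      refine (norm_mul_le _ _).trans ?_
      refine mul_le_mul ?_ ?_ (norm_nonneg _) (by positivity)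
      · rw [norm_sub_rev]; exact hta
      · refine (norm_mul_le _ _).trans ?_
        exact mul_le_mul hPb_norm hPa_norm (norm_nonneg _) (by positivity)
    have e2 : ‖Ea * ((Pb - Eb) * Pa)‖
        ≤ Real.exp ‖A‖ * ((‖B‖ ^ 3 * Real.exp ‖B‖ * h ^ 3) * ((1 + ‖A‖ ^ 3) * Real.exp ‖A‖)) := by
      refine (norm_mul_le _ _).trans ?_
      refine mul_le_mul hEa_norm ?_ (norm_nonneg _) (by positivity)
      refine (norm_mul_le _ _).trans ?_
      refine mul_le_mul ?_ hPa_norm (norm_nonneg _) (by positivity)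
      rw [norm_sub_rev]; exact htb
    have e3 : ‖(Ea * Eb) * (Pa - Ea)‖
        ≤ (Real.exp ‖A‖ * Real.exp ‖B‖) * (‖A‖ ^ 3 * Real.exp ‖A‖ * h ^ 3) := by
      refine (norm_mul_le _ _).trans ?_
      refine mul_le_mul ?_ ?_ (norm_nonneg _) (by positivity)
      · exact (norm_mul_le _ _).trans (mul_le_mul hEa_norm hEb_norm (norm_nonneg _) (by positivity))
      · rw [norm_sub_rev]; exact hta
    calc ‖(Pa - Ea) * (Pb * Pa) + Ea * ((Pb - Eb) * Pa) + (Ea * Eb) * (Pa - Ea)‖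
        ≤ ‖(Pa - Ea) * (Pb * Pa) + Ea * ((Pb - Eb) * Pa)‖ + ‖(Ea * Eb) * (Pa - Ea)‖ :=
          norm_add_le _ _
      _ ≤ (‖(Pa - Ea) * (Pb * Pa)‖ + ‖Ea * ((Pb - Eb) * Pa)‖) + ‖(Ea * Eb) * (Pa - Ea)‖ := by
          gcongr; exact norm_add_le _ _
      _ ≤ ((‖A‖ ^ 3 * Real.exp ‖A‖ * h ^ 3) * ((1 + ‖B‖ ^ 3) * Real.exp ‖B‖ * ((1 + ‖A‖ ^ 3) * Real.exp ‖A‖))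
          + Real.exp ‖A‖ * ((‖B‖ ^ 3 * Real.exp ‖B‖ * h ^ 3) * ((1 + ‖A‖ ^ 3) * Real.exp ‖A‖)))
          + (Real.exp ‖A‖ * Real.exp ‖B‖) * (‖A‖ ^ 3 * Real.exp ‖A‖ * h ^ 3) := by
          exact add_le_add (add_le_add e1 e2) e3
      _ = (‖A‖ ^ 3 * Real.exp ‖A‖ * ((1 + ‖B‖ ^ 3) * Real.exp ‖B‖ * ((1 + ‖A‖ ^ 3) * Real.exp ‖A‖))
          + Real.exp ‖A‖ * (‖B‖ ^ 3 * Real.exp ‖B‖ * ((1 + ‖A‖ ^ 3) * Real.exp ‖A‖))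
          + Real.exp ‖A‖ * Real.exp ‖B‖ * (‖A‖ ^ 3 * Real.exp ‖A‖)) * h ^ 3 := by ring
  -- middle bound
  have hmid : ‖T - Pa * Pb * Pa‖ ≤ (16 * W ^ 6) * h ^ 3 := by
    have : T - Pa * Pb * Pa = -(h ^ 3 • strangE A B h) := by rw [key]; abel
    rw [this, norm_neg, norm_smul (h ^ 3) (strangE A B h), Real.norm_eq_abs, abs_of_nonneg h30]
    calc h ^ 3 * ‖strangE A B h‖ ≤ h ^ 3 * (16 * W ^ 6) :=
          mul_le_mul_of_nonneg_left hEbound h30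
      _ = (16 * W ^ 6) * h ^ 3 := by ring
  -- assemble
  have hdec : exp (h • (A + B)) - Ea * Eb * Ea
      = (exp (h • (A + B)) - T) + ((T - Pa * Pb * Pa) + (Pa * Pb * Pa - Ea * Eb * Ea)) := by
    abel
  calc ‖exp (h • (A + B)) - Ea * Eb * Ea‖
      = ‖(exp (h • (A + B)) - T) + ((T - Pa * Pb * Pa) + (Pa * Pb * Pa - Ea * Eb * Ea))‖ := by
        rw [hdec]
    _ ≤ ‖exp (h • (A + B)) - T‖ + (‖T - Pa * Pb * Pa‖ + ‖Pa * Pb * Pa - Ea * Eb * Ea‖) := by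
        refine (norm_add_le _ _).trans ?_
        gcongr
        exact norm_add_le _ _
    _ ≤ (‖A‖ + ‖B‖) ^ 3 * Real.exp (‖A‖ + ‖B‖) * h ^ 3 + ((16 * W ^ 6) * h ^ 3
        + (‖A‖ ^ 3 * Real.exp ‖A‖ * ((1 + ‖B‖ ^ 3) * Real.exp ‖B‖ * ((1 + ‖A‖ ^ 3) * Real.exp ‖A‖))
          + Real.exp ‖A‖ * (‖B‖ ^ 3 * Real.exp ‖B‖ * ((1 + ‖A‖ ^ 3) * Real.exp ‖A‖))
          + Real.exp ‖A‖ * Real.exp ‖B‖ * (‖A‖ ^ 3 * Real.exp ‖A‖)) * h ^ 3) := by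
        exact add_le_add hT1 (add_le_add hmid htel)
    _ = ((‖A‖ + ‖B‖) ^ 3 * Real.exp (‖A‖ + ‖B‖)
        + 16 * (1 + ‖A‖ + ‖B‖) ^ 6
        + (‖A‖ ^ 3 * Real.exp ‖A‖ * ((1 + ‖B‖ ^ 3) * Real.exp ‖B‖ * ((1 + ‖A‖ ^ 3) * Real.exp ‖A‖))
          + Real.exp ‖A‖ * (‖B‖ ^ 3 * Real.exp ‖B‖ * ((1 + ‖A‖ ^ 3) * Real.exp ‖A‖))
          + Real.exp ‖A‖ * Real.exp ‖B‖ * (‖A‖ ^ 3 * Real.exp ‖A‖))) * h ^ 3 := by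
        rw [hW]; ring
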